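/- The tangent curve T(t) = (¼(√2 cos 2t − 2 cos t), −¼(√2 sin 2t + 2 sin t), ½√(√2 cos 3t + 5/2)) for t ∈ [0, 2π] is a unit-speed-normalized tangent (‖T(t)‖ = 1 for all t) and satisfies the zero-swept-area condition ∫₀^{2π} T(t) × T'(t) dt = 0, but the corresponding space curve is not closed: ∫₀^{2π} T(t) dt ≠ 0. -/

import Mathlib

open intervalIntegral Set Real

/-- Cross product in ℝ³. -/
def cross3 (v w : Fin 3 → ℝ) : Fin 3 → ℝ :=
  ![v 1 * w 2 - v 2 * w 1, v 2 * w 0 - v 0 * w 2, v 0 * w 1 - v 1 * w 0]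

noncomputable def uu (t : ℝ) : ℝ := Real.sqrt 2 * Real.cos (3*t) + 5/2
noncomputable def fA (t : ℝ) : ℝ := (1/4) * (Real.sqrt 2 * Real.cos (2*t) - 2 * Real.cos t)
noncomputable def fB (t : ℝ) : ℝ := -(1/4) * (Real.sqrt 2 * Real.sin (2*t) + 2 * Real.sin t)
noncomputable def fC (t : ℝ) : ℝ := (1/2) * Real.sqrt (uu t)
noncomputable def dA (t : ℝ) : ℝ := (1/4) * (-(2*Real.sqrt 2) * Real.sin (2*t) + 2 * Real.sin t)
noncomputable def dB (t : ℝ) : ℝ := -(1/4) * (2*Real.sqrt 2 * Real.cos (2*t) + 2 * Real.cos t)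
noncomputable def dC (t : ℝ) : ℝ := -(3*Real.sqrt 2 * Real.sin (3*t)) / (4 * Real.sqrt (uu t))

lemma uu_pos (t : ℝ) : 0 < uu t := by
  have h1 : Real.sqrt 2 ^ 2 = 2 := Real.sq_sqrt (by norm_num)
  have h2 : (0:ℝ) ≤ Real.sqrt 2 := Real.sqrt_nonneg 2
  have h3 := Real.neg_one_le_cos (3*t)
  unfold uu
  nlinarith

lemma sqrtuu_pos (t : ℝ) : 0 < Real.sqrt (uu t) := Real.sqrt_pos.2 (uu_pos t)

lemma fC_pos (t : ℝ) : 0 < fC t := by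
  have := sqrtuu_pos t; unfold fC; linarith

lemma hA (t : ℝ) : HasDerivAt fA (dA t) t := by
  have h2 : HasDerivAt (fun t:ℝ => 2*t) 2 t := by simpa using (hasDerivAt_id t).const_mul 2
  have hc2 : HasDerivAt (fun t:ℝ => Real.cos (2*t)) (-Real.sin (2*t) * 2) t :=
    (Real.hasDerivAt_cos (2*t)).comp t h2
  have := ((hc2.const_mul (Real.sqrt 2)).sub ((Real.hasDerivAt_cos t).const_mul 2)).const_mul (1/4 : ℝ)
  refine this.congr_deriv (Eq.symm ?_)
  unfold dA; ring

lemma hB (t : ℝ) : HasDerivAt fB (dB t) t := by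
  have h2 : HasDerivAt (fun t:ℝ => 2*t) 2 t := by simpa using (hasDerivAt_id t).const_mul 2
  have hs2 : HasDerivAt (fun t:ℝ => Real.sin (2*t)) (Real.cos (2*t) * 2) t :=
    (Real.hasDerivAt_sin (2*t)).comp t h2
  have := ((hs2.const_mul (Real.sqrt 2)).add ((Real.hasDerivAt_sin t).const_mul 2)).const_mul (-(1/4) : ℝ)
  refine this.congr_deriv (Eq.symm ?_)
  unfold dB; ring

lemma hu (t : ℝ) : HasDerivAt uu (-(3*Real.sqrt 2) * Real.sin (3*t)) t := by
  have h3 : HasDerivAt (fun t:ℝ => 3*t) 3 t := by simpa using (hasDerivAt_id t).const_mul 3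
  have hc3 : HasDerivAt (fun t:ℝ => Real.cos (3*t)) (-Real.sin (3*t) * 3) t :=
    (Real.hasDerivAt_cos (3*t)).comp t h3
  have := (hc3.const_mul (Real.sqrt 2)).add_const (5/2 : ℝ)
  refine this.congr_deriv (Eq.symm ?_)
  ring

lemma hC (t : ℝ) : HasDerivAt fC (dC t) t := by
  have hs := (Real.hasDerivAt_sqrt (ne_of_gt (uu_pos t))).comp t (hu t)
  have := hs.const_mul (1/2 : ℝ)
  refine this.congr_deriv (Eq.symm ?_)
  unfold dC
  have h := (sqrtuu_pos t).ne'
  rw [div_eq_iff (by positivity)]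
  field_simp
  try ring
  try exact Or.inl trivial

-- continuity
lemma cont_fA : Continuous fA := by unfold fA; fun_prop
lemma cont_fB : Continuous fB := by unfold fB; fun_prop
lemma cont_fC : Continuous fC := by
  unfold fC uu
  exact continuous_const.mul (Real.continuous_sqrt.comp (by fun_prop))
lemma cont_dA : Continuous dA := by unfold dA; fun_prop
lemma cont_dB : Continuous dB := by unfold dB; fun_prop
lemma cont_dC : Continuous dC := by
  unfold dC
  apply Continuous.div (by fun_prop)
  · exact continuous_const.mul (Real.continuous_sqrt.comp (by unfold uu; fun_prop))
  · intro t
    have := sqrtuu_pos t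
    positivity

-- special trig values
lemma cos_2pi3 : Real.cos (2*π/3) = -(1/2) := by
  rw [show (2*π/3 : ℝ) = π - π/3 by ring, Real.cos_pi_sub, Real.cos_pi_div_three]
lemma sin_2pi3 : Real.sin (2*π/3) = Real.sqrt 3 / 2 := by
  rw [show (2*π/3 : ℝ) = π - π/3 by ring, Real.sin_pi_sub, Real.sin_pi_div_three]
lemma cos_4pi3 : Real.cos (4*π/3) = -(1/2) := by
  rw [show (4*π/3 : ℝ) = 2*π - 2*π/3 by ring, Real.cos_two_pi_sub, cos_2pi3]
lemma sin_4pi3 : Real.sin (4*π/3) = -(Real.sqrt 3 / 2) := by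
  rw [show (4*π/3 : ℝ) = 2*π - 2*π/3 by ring, Real.sin_two_pi_sub, sin_2pi3]
lemma cos_8pi3 : Real.cos (8*π/3) = -(1/2) := by
  rw [show (8*π/3 : ℝ) = 2*π/3 + 2*π by ring, Real.cos_add_two_pi, cos_2pi3]
lemma sin_8pi3 : Real.sin (8*π/3) = Real.sqrt 3 / 2 := by
  rw [show (8*π/3 : ℝ) = 2*π/3 + 2*π by ring, Real.sin_add_two_pi, sin_2pi3]

lemma sum_sin2 (t : ℝ) :
    Real.sin (2*t) + Real.sin (2*(t + 2*π/3)) + Real.sin (2*(t + 4*π/3)) = 0 := by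
  rw [show 2*(t + 2*π/3) = 2*t + 4*π/3 by ring, show 2*(t + 4*π/3) = 2*t + 8*π/3 by ring,
    Real.sin_add, Real.sin_add, cos_4pi3, sin_4pi3, cos_8pi3, sin_8pi3]
  ring
lemma sum_sin1 (t : ℝ) :
    Real.sin t + Real.sin (t + 2*π/3) + Real.sin (t + 4*π/3) = 0 := by
  rw [Real.sin_add, Real.sin_add, cos_2pi3, sin_2pi3, cos_4pi3, sin_4pi3]
  ring
lemma sum_cos2 (t : ℝ) :
    Real.cos (2*t) + Real.cos (2*(t + 2*π/3)) + Real.cos (2*(t + 4*π/3)) = 0 := by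
  rw [show 2*(t + 2*π/3) = 2*t + 4*π/3 by ring, show 2*(t + 4*π/3) = 2*t + 8*π/3 by ring,
    Real.cos_add, Real.cos_add, cos_4pi3, sin_4pi3, cos_8pi3, sin_8pi3]
  ring
lemma sum_cos1 (t : ℝ) :
    Real.cos t + Real.cos (t + 2*π/3) + Real.cos (t + 4*π/3) = 0 := by
  rw [Real.cos_add, Real.cos_add, cos_2pi3, sin_2pi3, cos_4pi3, sin_4pi3]
  ring

lemma sum_fA (t : ℝ) : fA t + fA (t + 2*π/3) + fA (t + 4*π/3) = 0 := by
  unfold fA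
  linear_combination (Real.sqrt 2/4) * sum_cos2 t + (-(1/2)) * sum_cos1 t
lemma sum_fB (t : ℝ) : fB t + fB (t + 2*π/3) + fB (t + 4*π/3) = 0 := by
  unfold fB
  linear_combination (-(Real.sqrt 2)/4) * sum_sin2 t + (-(1/2)) * sum_sin1 t
lemma sum_dA (t : ℝ) : dA t + dA (t + 2*π/3) + dA (t + 4*π/3) = 0 := by
  unfold dA
  linear_combination (-(Real.sqrt 2)/2) * sum_sin2 t + (1/2) * sum_sin1 t
lemma sum_dB (t : ℝ) : dB t + dB (t + 2*π/3) + dB (t + 4*π/3) = 0 := by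
  unfold dB
  linear_combination (-(Real.sqrt 2)/2) * sum_cos2 t + (-(1/2)) * sum_cos1 t

-- shift invariance of fC, dC
lemma uu_shift (t c : ℝ) (h : 3*(t + c) = 3*t + 2*π) : uu (t + c) = uu t := by
  unfold uu; rw [h, Real.cos_add_two_pi]
lemma fC_shift1 (t : ℝ) : fC (t + 2*π/3) = fC t := by
  unfold fC; rw [uu_shift t (2*π/3) (by ring)]
lemma fC_shift2 (t : ℝ) : fC (t + 4*π/3) = fC t := by
  have := fC_shift1 (t + 2*π/3)
  rw [show t + 2*π/3 + 2*π/3 = t + 4*π/3 by ring] at this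
  rw [this, fC_shift1]
lemma dC_shift1 (t : ℝ) : dC (t + 2*π/3) = dC t := by
  unfold dC
  rw [uu_shift t (2*π/3) (by ring), show 3*(t + 2*π/3) = 3*t + 2*π by ring, Real.sin_add_two_pi]
lemma dC_shift2 (t : ℝ) : dC (t + 4*π/3) = dC t := by
  have := dC_shift1 (t + 2*π/3)
  rw [show t + 2*π/3 + 2*π/3 = t + 4*π/3 by ring] at this
  rw [this, dC_shift1]

-- integrand components
noncomputable def g0 (t : ℝ) : ℝ := fB t * dC t - fC t * dB t
noncomputable def g1 (t : ℝ) : ℝ := fC t * dA t - fA t * dC t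
noncomputable def g2 (t : ℝ) : ℝ := fA t * dB t - fB t * dA t

lemma cont_g0 : Continuous g0 := by
  unfold g0; exact (cont_fB.mul cont_dC).sub (cont_fC.mul cont_dB)
lemma cont_g1 : Continuous g1 := by
  unfold g1; exact (cont_fC.mul cont_dA).sub (cont_fA.mul cont_dC)
lemma cont_g2 : Continuous g2 := by
  unfold g2; exact (cont_fA.mul cont_dB).sub (cont_fB.mul cont_dA)

lemma sum_g0 (t : ℝ) : g0 t + g0 (t + 2*π/3) + g0 (t + 4*π/3) = 0 := by
  unfold g0
  rw [fC_shift1, fC_shift2, dC_shift1, dC_shift2]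
  linear_combination (dC t) * sum_fB t - (fC t) * sum_dB t
lemma sum_g1 (t : ℝ) : g1 t + g1 (t + 2*π/3) + g1 (t + 4*π/3) = 0 := by
  unfold g1
  rw [fC_shift1, fC_shift2, dC_shift1, dC_shift2]
  linear_combination (fC t) * sum_dA t - (dC t) * sum_fA t

lemma shift3_integral (f : ℝ → ℝ) (hf : Continuous f)
    (hsum : ∀ t, f t + f (t + 2*π/3) + f (t + 4*π/3) = 0) :
    ∫ t in (0:ℝ)..(2*π), f t = 0 := by
  have hint : ∀ a b : ℝ, IntervalIntegrable f MeasureTheory.volume a b :=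
    fun a b => hf.intervalIntegrable a b
  have h1 : (∫ t in (2*π/3:ℝ)..(4*π/3), f t) = ∫ t in (0:ℝ)..(2*π/3), f (t + 2*π/3) := by
    rw [intervalIntegral.integral_comp_add_right f (2*π/3)]
    norm_num
    rw [show (2*π/3 : ℝ) + 2*π/3 = 4*π/3 by ring]
  have h2 : (∫ t in (4*π/3:ℝ)..(2*π), f t) = ∫ t in (0:ℝ)..(2*π/3), f (t + 4*π/3) := by
    rw [intervalIntegral.integral_comp_add_right f (4*π/3)]
    norm_num
    rw [show (2*π/3 : ℝ) + 4*π/3 = 2*π by ring]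
  have hsplit : (∫ t in (0:ℝ)..(2*π), f t)
      = (∫ t in (0:ℝ)..(2*π/3), f t) + (∫ t in (2*π/3:ℝ)..(4*π/3), f t)
        + (∫ t in (4*π/3:ℝ)..(2*π), f t) := by
    rw [integral_add_adjacent_intervals (hint 0 (2*π/3)) (hint (2*π/3) (4*π/3)),
      integral_add_adjacent_intervals (hint 0 (4*π/3)) (hint (4*π/3) (2*π))]
  have hi1 : IntervalIntegrable (fun t => f (t + 2*π/3)) MeasureTheory.volume 0 (2*π/3) :=
    (hf.comp (by fun_prop : Continuous fun t:ℝ => t + 2*π/3)).intervalIntegrable 0 (2*π/3)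
  have hi2 : IntervalIntegrable (fun t => f (t + 4*π/3)) MeasureTheory.volume 0 (2*π/3) :=
    (hf.comp (by fun_prop : Continuous fun t:ℝ => t + 4*π/3)).intervalIntegrable 0 (2*π/3)
  have e1 := intervalIntegral.integral_add (hint 0 (2*π/3)) hi1
  have e2 := intervalIntegral.integral_add ((hint 0 (2*π/3)).add hi1) hi2
  rw [hsplit, h1, h2, ← e1, ← e2]
  simp [hsum]

lemma int_g0 : ∫ t in (0:ℝ)..(2*π), g0 t = 0 := shift3_integral g0 cont_g0 sum_g0
lemma int_g1 : ∫ t in (0:ℝ)..(2*π), g1 t = 0 := shift3_integral g1 cont_g1 sum_g1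

lemma cos3_eq (t : ℝ) : Real.cos (3*t) = Real.cos (2*t) * Real.cos t - Real.sin (2*t) * Real.sin t := by
  rw [← Real.cos_add]; ring_nf

lemma g2_eq (t : ℝ) : g2 t = (Real.sqrt 2 / 8) * Real.cos (3*t) := by
  have h1 := Real.sin_sq_add_cos_sq t
  have h2 := Real.sin_sq_add_cos_sq (2*t)
  have h4 : Real.sqrt 2 ^ 2 = 2 := Real.sq_sqrt (by norm_num)
  unfold g2 fA fB dA dB
  rw [cos3_eq t]
  linear_combination (-(Real.sqrt 2^2)/8) * h2 + (1/4) * h1 + (-(1/8)) * h4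

lemma int_g2 : ∫ t in (0:ℝ)..(2*π), g2 t = 0 := by
  have hF : ∀ t ∈ Set.uIcc (0:ℝ) (2*π), HasDerivAt (fun t => (Real.sqrt 2/24) * Real.sin (3*t)) (g2 t) t := by
    intro t _
    have h3 : HasDerivAt (fun t:ℝ => 3*t) 3 t := by simpa using (hasDerivAt_id t).const_mul 3
    have hs3 : HasDerivAt (fun t:ℝ => Real.sin (3*t)) (Real.cos (3*t) * 3) t :=
      (Real.hasDerivAt_sin (3*t)).comp t h3
    have := hs3.const_mul (Real.sqrt 2/24 : ℝ)
    refine this.congr_deriv (Eq.symm ?_)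
    rw [g2_eq t]; ring
  rw [intervalIntegral.integral_eq_sub_of_hasDerivAt hF
    ((cont_g2).intervalIntegrable 0 (2*π))]
  rw [show (3:ℝ)*(2*π) = 2*π + 2*π + 2*π by ring, Real.sin_add_two_pi, Real.sin_add_two_pi,
    Real.sin_two_pi]
  norm_num

theorem stmt_7 (T : ℝ → (Fin 3 → ℝ))
    (hT : ∀ t : ℝ, T t =
      ![(1/4) * (Real.sqrt 2 * Real.cos (2*t) - 2 * Real.cos t),
        -(1/4) * (Real.sqrt 2 * Real.sin (2*t) + 2 * Real.sin t),
        (1/2) * Real.sqrt (Real.sqrt 2 * Real.cos (3*t) + 5/2)]) :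
    (∀ t : ℝ, (T t 0)^2 + (T t 1)^2 + (T t 2)^2 = 1) ∧
    (∫ t in (0:ℝ)..(2*π), cross3 (T t) (deriv T t) = 0) ∧
    (∫ t in (0:ℝ)..(2*π), T t) ≠ 0 := by
  have hTe : T = fun t => ![fA t, fB t, fC t] := funext fun t => by rw [hT t]; rfl
  subst hTe
  have hD : ∀ t : ℝ, HasDerivAt (fun t => ![fA t, fB t, fC t] : ℝ → Fin 3 → ℝ)
      (![dA t, dB t, dC t]) t := by
    intro t
    rw [hasDerivAt_pi]
    intro i
    fin_cases i
    · simpa using hA t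
    · simpa using hB t
    · simpa using hC t
  have hderiv : ∀ t : ℝ, deriv (fun t => ![fA t, fB t, fC t] : ℝ → Fin 3 → ℝ) t
      = ![dA t, dB t, dC t] := fun t => (hD t).deriv
  refine ⟨?_, ?_, ?_⟩
  · -- unit norm
    intro t
    have hs : Real.sqrt (Real.sqrt 2 * Real.cos (3*t) + 5/2) ^ 2
        = Real.sqrt 2 * Real.cos (3*t) + 5/2 := Real.sq_sqrt (by
          have := uu_pos t; unfold uu at this; linarith)
    have h1 := Real.sin_sq_add_cos_sq t
    have h2 := Real.sin_sq_add_cos_sq (2*t)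
    have h3 := cos3_eq t
    have h4 : Real.sqrt 2 ^ 2 = 2 := Real.sq_sqrt (by norm_num)
    show fA t ^ 2 + fB t ^ 2 + fC t ^ 2 = 1
    unfold fA fB fC uu
    linear_combination (Real.sqrt 2^2/16) * h2 + (1/4) * h1 + (1/4) * hs
      + (Real.sqrt 2/4) * h3 + (1/16) * h4
  · -- zero swept area
    have hcross : (fun t => cross3 (![fA t, fB t, fC t]) (deriv (fun t => ![fA t, fB t, fC t] : ℝ → Fin 3 → ℝ) t))
        = fun t => ![g0 t, g1 t, g2 t] := by
      funext t
      rw [hderiv t]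
      unfold cross3 g0 g1 g2
      simp [Matrix.cons_val_zero, Matrix.cons_val_one, Matrix.head_cons]
    rw [hcross]
    have hcont : Continuous (fun t => ![g0 t, g1 t, g2 t] : ℝ → Fin 3 → ℝ) := by
      apply continuous_pi
      intro i
      fin_cases i
      · simpa using cont_g0
      · simpa using cont_g1
      · simpa using cont_g2
    have hint : IntervalIntegrable (fun t => ![g0 t, g1 t, g2 t] : ℝ → Fin 3 → ℝ)
        MeasureTheory.volume 0 (2*π) := hcont.intervalIntegrable 0 (2*π)
    funext i
    have happ := (ContinuousLinearMap.proj (R := ℝ) (φ := fun _ : Fin 3 => ℝ) i).intervalIntegral_comp_comm hint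
    have : (∫ t in (0:ℝ)..(2*π), (![g0 t, g1 t, g2 t] : Fin 3 → ℝ)) i
        = ∫ t in (0:ℝ)..(2*π), (![g0 t, g1 t, g2 t] : Fin 3 → ℝ) i := by
      exact happ.symm
    rw [Pi.zero_apply, this]
    fin_cases i
    · simpa using int_g0
    · simpa using int_g1
    · simpa using int_g2
  · -- not closed
    intro hzero
    have hcont : Continuous (fun t => ![fA t, fB t, fC t] : ℝ → Fin 3 → ℝ) := by
      apply continuous_pi
      intro i
      fin_cases i
      · simpa using cont_fA
      · simpa using cont_fB
      · simpa using cont_fC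
    have hint : IntervalIntegrable (fun t => ![fA t, fB t, fC t] : ℝ → Fin 3 → ℝ)
        MeasureTheory.volume 0 (2*π) := hcont.intervalIntegrable 0 (2*π)
    have happ := (ContinuousLinearMap.proj (R := ℝ) (φ := fun _ : Fin 3 => ℝ)
      (2 : Fin 3)).intervalIntegral_comp_comm hint
    have hz2 : (∫ t in (0:ℝ)..(2*π), (![fA t, fB t, fC t] : Fin 3 → ℝ)) 2
        = ∫ t in (0:ℝ)..(2*π), fC t := by
      exact happ.symm
    have hpos : 0 < ∫ t in (0:ℝ)..(2*π), fC t := by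
      apply intervalIntegral.intervalIntegral_pos_of_pos (cont_fC.intervalIntegrable 0 (2*π))
        (fun t => fC_pos t)
      positivity
    rw [hzero] at hz2
    simp at hz2
    linarith [hpos, hz2.symm ▸ hpos]
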